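/- Let G be a non-degenerate [n,k,d]_q A^sMDS code whose dual is AMDS (t = 1). If G has a codeword of weight d + s + 1 − α for some 0 ≤ α ≤ s+1, then n ≤ q(s+1) + k − 2 + α. -/

import Mathlib

/-- The number of points (with multiplicity) of the projective system `G`
lying on the hyperplane `ker φ`. -/
noncomputable def hypCount {F : Type*} [Field F] [DecidableEq F] {n k : ℕ}
    (G : Fin n → Fin k → F) (φ : (Fin k → F) →ₗ[F] F) : ℕ :=
  (Finset.univ.filter fun i => φ (G i) = 0).card

/-- `G` is (the projective system of) a non-degenerate linear `[n,k,d]_q` code: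
an `n`-multiset of nonzero points spanning `PG(k-1,q)`, every hyperplane containing
at most `n - d` points, and some hyperplane (a secant) containing exactly `n - d`. -/
def IsCodePS (F : Type*) [Field F] [DecidableEq F] (n k d : ℕ)
    (G : Fin n → Fin k → F) : Prop :=
  0 < d ∧ (∀ i, G i ≠ 0) ∧ Submodule.span F (Set.range G) = ⊤ ∧
  (∀ φ : (Fin k → F) →ₗ[F] F, φ ≠ 0 → hypCount G φ + d ≤ n) ∧
  (∃ φ : (Fin k → F) →ₗ[F] F, φ ≠ 0 ∧ hypCount G φ + d = n)

/-- The dual code of the code with projective system `G` has minimum distance `w`: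
every subfamily of fewer than `w` points is linearly independent, and some
subfamily of `w` points is linearly dependent. -/
def HasDualDist (F : Type*) [Field F] {n k : ℕ} (G : Fin n → Fin k → F) (w : ℕ) : Prop :=
  (∀ S : Finset (Fin n), S.card < w → LinearIndependent F (fun i : {x // x ∈ S} => G i.1)) ∧
  (∃ S : Finset (Fin n), S.card = w ∧ ¬ LinearIndependent F (fun i : {x // x ∈ S} => G i.1))

/-- Let `G` be a non-degenerate `[n,k,d]_q` A^sMDS code, `d > 1`, `s ≥ 1`, whose dual is
AMDS (`t = 1`, i.e. `d^⊥ = k`). If `G` has a codeword of weight `d + s + 1 - α` for some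
`0 ≤ α ≤ s + 1` — equivalently, some hyperplane meets `G` in exactly `k - 2 + α` points —
then `n ≤ q(s+1) + k - 2 + α`. -/
theorem weight_spectrum_bound (F : Type*) [Field F] [Fintype F] [DecidableEq F]
    (n k d s α : ℕ) (G : Fin n → Fin k → F)
    (hk : 2 ≤ k) (hG : IsCodePS F n k d G) (hs : d + k + s = n + 1)
    (hd : 1 < d) (hs1 : 1 ≤ s)
    (hdual : HasDualDist F G k)
    (hα : α ≤ s + 1)
    (hword : ∃ φ : (Fin k → F) →ₗ[F] F, φ ≠ 0 ∧ hypCount G φ = k - 2 + α) :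
    n + 2 ≤ (s + 1) * Fintype.card F + k + α := by
  classical
  obtain ⟨hd0, hne, hspan, hub, -⟩ := hG
  obtain ⟨φ, hφ, hcount⟩ := hword
  set T : Finset (Fin n) := Finset.univ.filter (fun i => φ (G i) = 0) with hT
  have hTcard : T.card = k - 2 + α := hcount
  obtain ⟨S, hST, hScard⟩ : ∃ S ⊆ T, S.card = k - 2 :=
    Finset.exists_subset_card_eq (s := T) (by omega)
  set W : Submodule F (Fin k → F) := Submodule.span F (G '' ↑S) with hWdef
  have hWle : W ≤ LinearMap.ker φ := by
    rw [Submodule.span_le]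
    rintro x ⟨i, hi, rfl⟩
    have := hST hi
    simp only [hT, Finset.mem_filter] at this
    simpa using this.2
  -- find v ∈ ker φ \ W
  have hnotle : ¬ LinearMap.ker φ ≤ W := by
    intro hle
    have h1 : Module.finrank F W ≤ k - 2 := by
      have : Module.finrank F (Submodule.span F ((S.image G : Finset (Fin k → F)) : Set (Fin k → F))) ≤ (S.image G).card :=
        finrank_span_finset_le_card _
      have h2 : ((S.image G : Finset (Fin k → F)) : Set (Fin k → F)) = G '' ↑S := by
        simp [Finset.coe_image]
      rw [h2] at this
      calc Module.finrank F W ≤ (S.image G).card := this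
        _ ≤ S.card := Finset.card_image_le
        _ = k - 2 := hScard
    have h3 : Module.finrank F (LinearMap.ker φ) ≤ k - 2 :=
      le_trans (Submodule.finrank_mono hle) h1
    have h4 : Module.finrank F (LinearMap.range φ) ≤ 1 := by
      have := Submodule.finrank_le (LinearMap.range φ)
      simpa using this
    have h5 := LinearMap.finrank_range_add_finrank_ker φ
    have h6 : Module.finrank F (Fin k → F) = k := by simp
    omega
  obtain ⟨v, hvker, hvW⟩ := SetLike.not_le_iff_exists.mp hnotle
  obtain ⟨ψ, hψv, hpsiW⟩ := W.exists_dual_map_eq_bot_of_notMem hvW inferInstance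
  have hψ0 : ∀ x ∈ W, ψ x = 0 := by
    intro x hx
    have : ψ x ∈ W.map ψ := Submodule.mem_map_of_mem hx
    rw [hpsiW] at this
    exact (Submodule.mem_bot F).mp this
  -- key bound on each fiber
  have key : ∀ c : F,
      (Finset.univ.filter (fun i => φ (G i) ≠ 0 ∧ ψ (G i) * (φ (G i))⁻¹ = c)).card ≤ s + 1 := by
    intro c
    set θ : (Fin k → F) →ₗ[F] F := ψ - c • φ with hθ
    have hθ0 : θ ≠ 0 := by
      intro h
      have : θ v = 0 := by rw [h]; rfl
      rw [hθ] at this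
      simp only [LinearMap.sub_apply, LinearMap.smul_apply, smul_eq_mul] at this
      rw [LinearMap.mem_ker.mp hvker] at this
      simp at this
      exact hψv this
    have hbound := hub θ hθ0
    set K : Finset (Fin n) := Finset.univ.filter (fun i => θ (G i) = 0) with hK
    have hKcard : K.card = hypCount G θ := rfl
    set B : Finset (Fin n) :=
      Finset.univ.filter (fun i => φ (G i) ≠ 0 ∧ ψ (G i) * (φ (G i))⁻¹ = c) with hB
    have hBK : B ⊆ K := by
      intro i hi
      simp only [hB, Finset.mem_filter, Finset.mem_univ, true_and] at hi
      obtain ⟨h1, h2⟩ := hi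
      simp only [hK, Finset.mem_filter, Finset.mem_univ, true_and, hθ,
        LinearMap.sub_apply, LinearMap.smul_apply, smul_eq_mul]
      have : ψ (G i) = c * φ (G i) := by
        field_simp at h2
        rw [h2]; ring
      rw [this]; ring
    have hSK : S ⊆ K := by
      intro i hi
      have hiT := hST hi
      simp only [hT, Finset.mem_filter, Finset.mem_univ, true_and] at hiT
      have hGi : G i ∈ W := Submodule.subset_span ⟨i, hi, rfl⟩
      simp only [hK, Finset.mem_filter, Finset.mem_univ, true_and, hθ,
        LinearMap.sub_apply, LinearMap.smul_apply, smul_eq_mul]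
      rw [hψ0 _ hGi, hiT]; ring
    have hdisj : Disjoint B S := by
      rw [Finset.disjoint_left]
      intro i hiB hiS
      have hiT := hST hiS
      simp only [hT, Finset.mem_filter, Finset.mem_univ, true_and] at hiT
      simp only [hB, Finset.mem_filter, Finset.mem_univ, true_and] at hiB
      exact hiB.1 hiT
    have hcards : B.card + S.card ≤ K.card := by
      rw [← Finset.card_union_of_disjoint hdisj]
      exact Finset.card_le_card (Finset.union_subset hBK hSK)
    rw [hScard, hKcard] at hcards
    omega
  -- partition
  have hsplit : T.card + Tᶜ.card = n := by
    rw [Finset.card_add_card_compl]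
    exact Fintype.card_fin n
  have hfib : Tᶜ.card = ∑ c : F,
      (Tᶜ.filter (fun i => ψ (G i) * (φ (G i))⁻¹ = c)).card :=
    Finset.card_eq_sum_card_fiberwise (fun i _ => Finset.mem_univ _)
  have hcompl : ∀ c : F, Tᶜ.filter (fun i => ψ (G i) * (φ (G i))⁻¹ = c)
      = Finset.univ.filter (fun i => φ (G i) ≠ 0 ∧ ψ (G i) * (φ (G i))⁻¹ = c) := by
    intro c
    ext i
    simp [hT, Finset.mem_filter, Finset.mem_compl, and_assoc]
  have hsum : Tᶜ.card ≤ Fintype.card F * (s + 1) := by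
    rw [hfib]
    calc ∑ c : F, (Tᶜ.filter (fun i => ψ (G i) * (φ (G i))⁻¹ = c)).card
        ≤ ∑ _c : F, (s + 1) := by
          apply Finset.sum_le_sum
          intro c _
          rw [hcompl c]
          exact key c
      _ = Fintype.card F * (s + 1) := by simp [Finset.sum_const, Finset.card_univ, mul_comm]
  rw [mul_comm]
  set m := Fintype.card F * (s + 1) with hm
  omega
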